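/- Let ι be the permutation of Fin 4 × Bool given by ι(i, b) = (i, ¬b), and let W₄ be the centralizer of ι in the permutation group of Fin 4 × Bool (so W₄ is the hyperoctahedral group of signed permutations of 4 letters, of order 384). Let H be the subgroup of W₄ consisting of those w ∈ W₄ that map the subset {0,1} × Bool onto itself (so H is a copy of W₂ × W₂, of order 64). Then for every group homomorphism ε from H to {±1} (the units of ℤ) and every w ∈ W₄, the integer ∑ ε(g⁻¹ w g), the sum taken over all g ∈ W₄ such that g⁻¹ w g ∈ H, is divisible by 2·|H| = 128. -/

import Mathlib

open scoped Pointwise Classical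

/-- The fixed-point-free involution `(i, b) ↦ (i, ¬b)` of `Fin 4 × Bool`. -/
def iota : Equiv.Perm (Fin 4 × Bool) :=
  Equiv.prodCongr (Equiv.refl (Fin 4))
    ⟨fun b => !b, fun b => !b, fun b => Bool.not_not b, fun b => Bool.not_not b⟩

/-- The hyperoctahedral group `W₄`: the centralizer of `iota` in the
permutation group of `Fin 4 × Bool`. -/
def W4 : Subgroup (Equiv.Perm (Fin 4 × Bool)) := Subgroup.centralizer {iota}

/-- The subgroup `H ≅ W₂ × W₂` of `W₄` consisting of the elements of `W₄`
mapping the subset `{0, 1} × Bool` onto itself. -/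
def Hsub : Subgroup W4 :=
  Subgroup.comap W4.subtype
    (MulAction.stabilizer (Equiv.Perm (Fin 4 × Bool))
      ({p : Fin 4 × Bool | p.1 ∈ ({0, 1} : Set (Fin 4))} : Set (Fin 4 × Bool)))

namespace Stmt9Aux

/-- The block `{0,1} × Bool`. -/
def S : Set (Fin 4 × Bool) := {p : Fin 4 × Bool | p.1 ∈ ({0, 1} : Set (Fin 4))}

lemma perm_smul_set_eq_iff {α : Type*} (g : Equiv.Perm α) (A B : Set α) :
    g • A = B ↔ ∀ a, a ∈ A ↔ g a ∈ B := by
  constructor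
  · intro h a
    constructor
    · intro ha
      have : g • a ∈ g • A := Set.smul_mem_smul_set ha
      rwa [h] at this
    · intro ha
      rw [← h] at ha
      rcases ha with ⟨b, hb, hba⟩
      have : b = a := g.injective hba
      rwa [← this]
  · intro h
    ext b
    constructor
    · rintro ⟨a, ha, rfl⟩
      exact (h a).1 ha
    · intro hb
      refine ⟨g⁻¹ b, ?_, ?_⟩
      · exact (h (g⁻¹ b)).2 (by simpa using hb)
      · simp
  
lemma mem_W4_iff (g : Equiv.Perm (Fin 4 × Bool)) : g ∈ W4 ↔ iota * g = g * iota := by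
  simp [W4, Subgroup.mem_centralizer_iff]

lemma mem_Hsub_iff (x : W4) : x ∈ Hsub ↔ (x : Equiv.Perm (Fin 4 × Bool)) • S = S := by
  simp [Hsub, S, Subgroup.mem_comap, Subgroup.mem_subgroupOf, MulAction.mem_stabilizer_iff]

lemma W4_comm (g : W4) (p : Fin 4 × Bool) :
    (g : Equiv.Perm (Fin 4 × Bool)) (p.1, !p.2)
      = (((g : Equiv.Perm (Fin 4 × Bool)) p).1, !((g : Equiv.Perm (Fin 4 × Bool)) p).2) := by
  have h := (mem_W4_iff _).mp g.2
  have h' := congrArg (fun e => e p) h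
  simp only [Equiv.Perm.mul_apply] at h'
  have hip : iota p = (p.1, !p.2) := rfl
  have hip2 : iota ((g : Equiv.Perm (Fin 4 × Bool)) p)
      = ((((g : Equiv.Perm (Fin 4 × Bool)) p).1), !((g : Equiv.Perm (Fin 4 × Bool)) p).2) := rfl
  rw [← hip, ← hip2, ← h']

lemma bool_xor_not (b c : Bool) : xor (!b) c = !(xor b c) := by cases b <;> cases c <;> rfl

/-- The signed permutation attached to `(π, s)`. -/
def mkPerm (π : Equiv.Perm (Fin 4)) (s : Fin 4 → Bool) : Equiv.Perm (Fin 4 × Bool) where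
  toFun p := (π p.1, xor p.2 (s p.1))
  invFun p := (π.symm p.1, xor p.2 (s (π.symm p.1)))
  left_inv p := by cases p with | mk i b => simp [Bool.xor_assoc]
  right_inv p := by cases p with | mk i b => simp [Bool.xor_assoc]

lemma mkPerm_mem (π : Equiv.Perm (Fin 4)) (s : Fin 4 → Bool) : mkPerm π s ∈ W4 := by
  rw [mem_W4_iff]
  apply Equiv.ext
  intro p
  cases p with
  | mk i b =>
    show iota (mkPerm π s (i, b)) = mkPerm π s (iota (i, b))
    have h1 : iota (mkPerm π s (i, b)) = (π i, !(xor b (s i))) := rfl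
    have h2 : mkPerm π s (iota (i, b)) = (π i, xor (!b) (s i)) := rfl
    rw [h1, h2, bool_xor_not]

def Fmap (x : Equiv.Perm (Fin 4) × (Fin 4 → Bool)) : W4 :=
  ⟨mkPerm x.1 x.2, mkPerm_mem x.1 x.2⟩

lemma Fmap_bijective : Function.Bijective Fmap := by
  constructor
  · rintro ⟨π, s⟩ ⟨π', s'⟩ h
    have h' : mkPerm π s = mkPerm π' s' := Subtype.ext_iff.mp h
    have key : ∀ i : Fin 4, (π i, xor false (s i)) = (π' i, xor false (s' i)) := by
      intro i
      exact congrArg (fun e => e (i, false)) h'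
    have hπ : π = π' := by
      apply Equiv.ext
      intro i
      exact (Prod.ext_iff.mp (key i)).1
    have hs : s = s' := by
      funext i
      have := (Prod.ext_iff.mp (key i)).2
      simpa using this
    rw [Prod.ext_iff]; exact ⟨hπ, hs⟩
  · intro w
    -- the underlying permutation of `Fin 4`
    have hinj : Function.Injective (fun i : Fin 4 => ((w : Equiv.Perm (Fin 4 × Bool)) (i, false)).1) := by
      intro i j h
      set W := (w : Equiv.Perm (Fin 4 × Bool)) with hW
      by_cases hc : (W (i, false)).2 = (W (j, false)).2
      · have : W (i, false) = W (j, false) := Prod.ext h hc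
        have := W.injective this
        exact (Prod.ext_iff.mp this).1
      · have hcc : (W (j, false)).2 = !(W (i, false)).2 := by
          cases h1 : (W (i, false)).2 <;> cases h2 : (W (j, false)).2 <;> simp_all
        have h3 : W (j, false) = ((W (i, false)).1, !(W (i, false)).2) := Prod.ext (h.symm) hcc
        have h4 : W (i, true) = ((W (i, false)).1, !(W (i, false)).2) := W4_comm w (i, false)
        have : W (j, false) = W (i, true) := by rw [h3, h4]
        have := W.injective this
        have := (Prod.ext_iff.mp this).2
        simp at this
    have hbij := Finite.injective_iff_bijective.mp hinj
    refine ⟨(Equiv.ofBijective _ hbij, fun i => ((w : Equiv.Perm (Fin 4 × Bool)) (i, false)).2), ?_⟩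
    apply Subtype.ext
    apply Equiv.ext
    intro p
    cases p with
    | mk i b =>
      cases b
      · show (((w : Equiv.Perm (Fin 4 × Bool)) (i, false)).1,
            xor false (((w : Equiv.Perm (Fin 4 × Bool)) (i, false)).2))
            = (w : Equiv.Perm (Fin 4 × Bool)) (i, false)
        simp
      · show (((w : Equiv.Perm (Fin 4 × Bool)) (i, false)).1,
            xor true (((w : Equiv.Perm (Fin 4 × Bool)) (i, false)).2))
            = (w : Equiv.Perm (Fin 4 × Bool)) (i, true)
        have h4 := W4_comm w (i, false)
        simp only [Bool.not_false] at h4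
        rw [h4]
        simp [Bool.true_xor]

lemma Fmap_mem_Hsub_iff (x : Equiv.Perm (Fin 4) × (Fin 4 → Bool)) :
    Fmap x ∈ Hsub ↔ ∀ i : Fin 4, (i = 0 ∨ i = 1) ↔ (x.1 i = 0 ∨ x.1 i = 1) := by
  rw [mem_Hsub_iff]
  rw [perm_smul_set_eq_iff]
  constructor
  · intro h i
    have := h (i, false)
    simpa [S, Set.mem_insert_iff, Fmap, mkPerm] using this
  · intro h p
    have := h p.1
    simpa [S, Set.mem_insert_iff, Fmap, mkPerm] using this

lemma card_Hsub : Fintype.card Hsub = 64 := by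
  have e1 : {x : Equiv.Perm (Fin 4) × (Fin 4 → Bool) // Fmap x ∈ Hsub} ≃ Hsub :=
    Equiv.subtypeEquiv (Equiv.ofBijective Fmap Fmap_bijective) (fun x => Iff.rfl)
  have e2 : {x : Equiv.Perm (Fin 4) × (Fin 4 → Bool) // Fmap x ∈ Hsub}
      ≃ {x : Equiv.Perm (Fin 4) × (Fin 4 → Bool) //
          ∀ i : Fin 4, (i = 0 ∨ i = 1) ↔ (x.1 i = 0 ∨ x.1 i = 1)} :=
    Equiv.subtypeEquivRight (fun x => Fmap_mem_Hsub_iff x)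
  have e3 : {x : Equiv.Perm (Fin 4) × (Fin 4 → Bool) //
          ∀ i : Fin 4, (i = 0 ∨ i = 1) ↔ (x.1 i = 0 ∨ x.1 i = 1)}
      ≃ {π : Equiv.Perm (Fin 4) // ∀ i : Fin 4, (i = 0 ∨ i = 1) ↔ (π i = 0 ∨ π i = 1)}
        × (Fin 4 → Bool) :=
    Equiv.prodSubtypeFstEquivSubtypeProd
      (p := fun π : Equiv.Perm (Fin 4) => ∀ i : Fin 4, (i = 0 ∨ i = 1) ↔ (π i = 0 ∨ π i = 1))
  rw [← Fintype.card_congr e1, Fintype.card_congr e2, Fintype.card_congr e3,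
    Fintype.card_prod]
  have h1 : Fintype.card {π : Equiv.Perm (Fin 4) //
      ∀ i : Fin 4, (i = 0 ∨ i = 1) ↔ (π i = 0 ∨ π i = 1)} = 4 := by decide
  have h2 : Fintype.card (Fin 4 → Bool) = 16 := by simp
  rw [h1, h2]

/-- The element exchanging the two blocks. -/
def tau : Equiv.Perm (Fin 4 × Bool) :=
  Equiv.prodCongr (Equiv.swap 0 2 * Equiv.swap 1 3) (Equiv.refl Bool)

lemma tau_mem : tau ∈ W4 := by
  rw [mem_W4_iff]
  apply Equiv.ext
  intro p
  revert p
  decide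

def τ : W4 := ⟨tau, tau_mem⟩

lemma τ_sq : τ * τ = 1 := by
  apply Subtype.ext
  show tau * tau = 1
  apply Equiv.ext
  intro p
  revert p
  decide

lemma τ_inv : τ⁻¹ = τ := by
  rw [inv_eq_iff_mul_eq_one, τ_sq]

lemma tau_smul_S : tau • S = Sᶜ := by
  rw [perm_smul_set_eq_iff]
  rintro ⟨i, b⟩
  show (i ∈ ({0, 1} : Set (Fin 4))) ↔ tau (i, b) ∈ Sᶜ
  have : tau (i, b) = ((Equiv.swap 0 2 * Equiv.swap 1 3 : Equiv.Perm (Fin 4)) i, b) := rfl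
  rw [this]
  clear this
  simp only [S, Set.mem_compl_iff, Set.mem_setOf_eq, Set.mem_insert_iff, Set.mem_singleton_iff]
  revert i
  decide

lemma tau_smul_Sc : tau • Sᶜ = S := by
  rw [perm_smul_set_eq_iff]
  rintro ⟨i, b⟩
  show ¬(i ∈ ({0, 1} : Set (Fin 4))) ↔ tau (i, b) ∈ S
  have : tau (i, b) = ((Equiv.swap 0 2 * Equiv.swap 1 3 : Equiv.Perm (Fin 4)) i, b) := rfl
  rw [this]
  clear this
  simp only [S, Set.mem_setOf_eq, Set.mem_insert_iff, Set.mem_singleton_iff]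
  revert i
  decide

lemma τ_not_mem : τ ∉ Hsub := by
  intro h
  rw [mem_Hsub_iff] at h
  have h' : tau • S = S := h
  have := (perm_smul_set_eq_iff tau S S).mp h' ((0 : Fin 4), false)
  have h2 : tau ((0 : Fin 4), false) = ((2 : Fin 4), false) := rfl
  rw [h2] at this
  simp only [S, Set.mem_setOf_eq, Set.mem_insert_iff, Set.mem_singleton_iff] at this
  revert this
  decide

lemma conj_mem {x : W4} (hx : x ∈ Hsub) : τ * x * τ ∈ Hsub := by
  rw [mem_Hsub_iff] at hx ⊢
  have hxc : (x : Equiv.Perm (Fin 4 × Bool)) • Sᶜ = Sᶜ := by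
    rw [perm_smul_set_eq_iff] at hx ⊢
    intro a
    simp only [Set.mem_compl_iff]
    exact not_iff_not.mpr (hx a)
  show (tau * (x : Equiv.Perm (Fin 4 × Bool)) * tau) • S = S
  rw [mul_smul, mul_smul, tau_smul_S, hxc, tau_smul_Sc]

lemma conj_mem_iff (x : W4) : x ∈ Hsub ↔ τ * x * τ ∈ Hsub := by
  constructor
  · exact fun h => conj_mem h
  · intro h
    have := conj_mem h
    have hx : τ * (τ * x * τ) * τ = x := by
      have : τ * (τ * x * τ) * τ = (τ * τ) * x * (τ * τ) := by group
      rw [this, τ_sq, one_mul, mul_one]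
    rwa [hx] at this

/-- Explicit bijection `(G ⧸ H) × H ≃ G`. -/
noncomputable def cosetProdEquiv {G : Type*} [Group G] (H : Subgroup G) : (G ⧸ H) × H ≃ G where
  toFun p := (Quotient.out p.1) * (p.2 : G)
  invFun g := (QuotientGroup.mk g,
    ⟨(Quotient.out (QuotientGroup.mk g : G ⧸ H))⁻¹ * g,
      QuotientGroup.eq.mp (QuotientGroup.out_eq' (QuotientGroup.mk g))⟩)
  left_inv := by
    rintro ⟨q, h⟩
    have h1 : QuotientGroup.mk (Quotient.out q * (h : G)) = q := by
      rw [QuotientGroup.mk_mul_of_mem _ h.2, QuotientGroup.out_eq']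
    refine Prod.ext h1 (Subtype.ext ?_)
    show (Quotient.out (QuotientGroup.mk (Quotient.out q * (h : G)) : G ⧸ H))⁻¹
        * (Quotient.out q * (h : G)) = (h : G)
    rw [h1, inv_mul_cancel_left]
  right_inv g := mul_inv_cancel_left _ _

/-- The summand. -/
noncomputable def fdef (ε : Hsub →* ℤˣ) (w : W4) (g : W4) : ℤ :=
  if hg : g⁻¹ * w * g ∈ Hsub then ((ε ⟨g⁻¹ * w * g, hg⟩ : ℤˣ) : ℤ) else 0

lemma fdef_coset (ε : Hsub →* ℤˣ) (w : W4) (g : W4) (h : W4) (hh : h ∈ Hsub) :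
    fdef ε w (g * h) = fdef ε w g := by
  have key : (g * h)⁻¹ * w * (g * h) = h⁻¹ * (g⁻¹ * w * g) * h := by group
  by_cases hx : g⁻¹ * w * g ∈ Hsub
  · have hx2 : (g * h)⁻¹ * w * (g * h) ∈ Hsub := by
      rw [key]
      exact Hsub.mul_mem (Hsub.mul_mem (Hsub.inv_mem hh) hx) hh
    rw [fdef, fdef, dif_pos hx2, dif_pos hx]
    congr 1
    have heq : (⟨(g * h)⁻¹ * w * (g * h), hx2⟩ : Hsub)
        = (⟨h, hh⟩ : Hsub)⁻¹ * ⟨g⁻¹ * w * g, hx⟩ * ⟨h, hh⟩ := by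
      apply Subtype.ext
      simpa using key
    rw [heq, map_mul, map_mul, map_inv]
    rw [mul_assoc, mul_comm (ε ⟨g⁻¹ * w * g, hx⟩) (ε ⟨h, hh⟩), inv_mul_cancel_left]
  · have hx2 : ¬((g * h)⁻¹ * w * (g * h) ∈ Hsub) := by
      rw [key]
      intro hc
      apply hx
      have h3 : g⁻¹ * w * g = h * (h⁻¹ * (g⁻¹ * w * g) * h) * h⁻¹ := by group
      rw [h3]
      exact Hsub.mul_mem (Hsub.mul_mem hh hc) (Hsub.inv_mem hh)
    rw [fdef, fdef, dif_neg hx2, dif_neg hx]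

lemma fdef_pair_even (ε : Hsub →* ℤˣ) (w : W4) (g : W4) :
    Even (fdef ε w g + fdef ε w (g * τ)) := by
  have key : (g * τ)⁻¹ * w * (g * τ) = τ * (g⁻¹ * w * g) * τ := by
    rw [mul_inv_rev, τ_inv]; group
  by_cases hx : g⁻¹ * w * g ∈ Hsub
  · have hx2 : (g * τ)⁻¹ * w * (g * τ) ∈ Hsub := by
      rw [key]; exact (conj_mem_iff _).mp hx
    rw [fdef, fdef, dif_pos hx, dif_pos hx2]
    rcases Int.units_eq_one_or (ε ⟨g⁻¹ * w * g, hx⟩) with h1 | h1 <;>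
      rcases Int.units_eq_one_or (ε ⟨(g * τ)⁻¹ * w * (g * τ), hx2⟩) with h2 | h2 <;>
      rw [h1, h2] <;> decide
  · have hx2 : ¬((g * τ)⁻¹ * w * (g * τ) ∈ Hsub) := by
      rw [key]
      intro hc
      exact hx ((conj_mem_iff _).mpr hc)
    rw [fdef, fdef, dif_neg hx, dif_neg hx2]
    exact Even.zero

lemma σ_respects : ∀ a b : W4, QuotientGroup.leftRel Hsub a b →
    QuotientGroup.leftRel Hsub (a * τ) (b * τ) := by
  intro a b hab
  rw [QuotientGroup.leftRel_apply] at hab ⊢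
  have : (a * τ)⁻¹ * (b * τ) = τ * (a⁻¹ * b) * τ := by
    rw [mul_inv_rev, τ_inv]; group
  rw [this]
  exact (conj_mem_iff _).mp hab

/-- Right multiplication by `τ` on the coset space. -/
noncomputable def σ : W4 ⧸ Hsub → W4 ⧸ Hsub :=
  @Quotient.map' _ _ (QuotientGroup.leftRel Hsub) (QuotientGroup.leftRel Hsub)
    (· * τ) σ_respects

lemma σ_mk (g : W4) : σ (QuotientGroup.mk g) = QuotientGroup.mk (g * τ) := rfl

lemma σ_σ (q : W4 ⧸ Hsub) : σ (σ q) = q := by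
  induction q using Quotient.inductionOn' with
  | h g =>
    show σ (σ (QuotientGroup.mk g)) = QuotientGroup.mk g
    rw [σ_mk, σ_mk, mul_assoc, τ_sq, mul_one]

lemma σ_ne (q : W4 ⧸ Hsub) : σ q ≠ q := by
  induction q using Quotient.inductionOn' with
  | h g =>
    show σ (QuotientGroup.mk g) ≠ QuotientGroup.mk g
    rw [σ_mk]
    intro h
    have := QuotientGroup.eq.mp h
    have h2 : (g * τ)⁻¹ * g = τ⁻¹ := by group
    rw [h2, τ_inv] at this
    exact τ_not_mem this

lemma main_aux (ε : Hsub →* ℤˣ) (w : W4) :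
    (128 : ℤ) ∣ ∑ g : W4, fdef ε w g := by
  classical
  -- group the sum by left cosets of Hsub
  have hsum : ∑ g : W4, fdef ε w g
      = ∑ q : W4 ⧸ Hsub, (64 : ℤ) * fdef ε w (Quotient.out q) := by
    rw [← Equiv.sum_comp (cosetProdEquiv Hsub) (fdef ε w), Fintype.sum_prod_type]
    apply Finset.sum_congr rfl
    intro q _
    have : ∀ h : Hsub, fdef ε w ((cosetProdEquiv Hsub) (q, h)) = fdef ε w (Quotient.out q) := by
      intro h
      show fdef ε w (Quotient.out q * (h : W4)) = fdef ε w (Quotient.out q)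
      exact fdef_coset ε w _ _ h.2
    rw [Finset.sum_congr rfl (fun h _ => this h), Finset.sum_const, Finset.card_univ,
      card_Hsub, nsmul_eq_mul]
    norm_num
  rw [hsum]
  -- the coset sum is even
  set T : ℤ := ∑ q : W4 ⧸ Hsub, fdef ε w (Quotient.out q) with hT
  have heven : (2 : ℤ) ∣ T := by
    have hzmod : ((T : ℤ) : ZMod 2) = 0 := by
      rw [hT]
      push_cast
      apply Finset.sum_ninvolution σ
      · intro q
        -- pair sum is even
        have hout : fdef ε w (Quotient.out (σ q)) = fdef ε w (Quotient.out q * τ) := by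
          have h1 : (QuotientGroup.mk (Quotient.out q * τ) : W4 ⧸ Hsub) = σ q := by
            rw [← σ_mk, QuotientGroup.out_eq']
          have h2 : (QuotientGroup.mk (Quotient.out q * τ) : W4 ⧸ Hsub)
              = QuotientGroup.mk (Quotient.out (σ q)) := by
            rw [h1, QuotientGroup.out_eq']
          have h3 : (Quotient.out q * τ)⁻¹ * Quotient.out (σ q) ∈ Hsub :=
            QuotientGroup.eq.mp h2
          have h4 : Quotient.out (σ q)
              = (Quotient.out q * τ) * ((Quotient.out q * τ)⁻¹ * Quotient.out (σ q)) := by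
            rw [mul_inv_cancel_left]
          rw [h4, fdef_coset ε w _ _ h3]
        obtain ⟨k, hk⟩ := fdef_pair_even ε w (Quotient.out q)
        have : fdef ε w (Quotient.out q) + fdef ε w (Quotient.out (σ q)) = 2 * k := by
          rw [hout, hk]; ring
        have hcast : ((fdef ε w (Quotient.out q) + fdef ε w (Quotient.out (σ q)) : ℤ) : ZMod 2)
            = 0 := by
          rw [this]
          exact (ZMod.intCast_zmod_eq_zero_iff_dvd _ 2).mpr ⟨k, by norm_num⟩
        push_cast at hcast
        exact hcast
      · intro q _
        exact σ_ne q
      · intro q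
        exact Finset.mem_univ _
      · intro q
        exact σ_σ q
    rwa [ZMod.intCast_zmod_eq_zero_iff_dvd, Nat.cast_ofNat] at hzmod
  obtain ⟨k, hk⟩ := heven
  rw [← Finset.mul_sum, ← hT, hk]
  exact ⟨k, by ring⟩

end Stmt9Aux

/-- Lemma 2.17(i) of the paper: for every character `ε : H → {±1}` and every
`w ∈ W₄`, the sum `∑_{g ∈ W₄, g⁻¹wg ∈ H} ε(g⁻¹wg)` is divisible by
`2 * |H| = 128`; equivalently, the induced character
`tr(w, Ind_{W₂×W₂}^{W₄}(ε))` is an even integer. -/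
theorem stmt_9 (ε : Hsub →* ℤˣ) (w : W4) :
    (128 : ℤ) ∣ ∑ g : W4,
      if hg : g⁻¹ * w * g ∈ Hsub then ((ε ⟨g⁻¹ * w * g, hg⟩ : ℤˣ) : ℤ) else 0 :=
  Stmt9Aux.main_aux ε w
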